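/- Mrs. Gerber bound on the residual uncertainty (step (57) in the proof of Proposition 4). Let A be a {0,1}-valued random variable, U a random variable on a finite set, N ~ Bernoulli(ε) with ε ∈ [0,1/2] independent of the pair (A, U), and E = A ⊕ N. Let v ∈ [0,1/2] be such that h₂(v) = H(A | U). Then H(A | U, E) ≤ h₂(v) + h₂(ε) − h₂(v⋆ε). -/

import Mathlib

open scoped BigOperators Classical

noncomputable section

/-- The function `x ↦ -x·log₂ x` used in Shannon entropy (with `0·log 0 = 0`). -/
def nH (x : ℝ) : ℝ := -(x * Real.logb 2 x)

/-- Shannon entropy (in bits) of a pmf on a finite set. -/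
def Hent {S : Type*} [Fintype S] (p : S → ℝ) : ℝ := ∑ s, nH (p s)

/-- Pushforward of a pmf along a map: the distribution of the random variable `f`. -/
def pmap {Ω S : Type*} [Fintype Ω] (p : Ω → ℝ) (f : Ω → S) : S → ℝ :=
  fun s => ∑ ω, if f ω = s then p ω else 0

/-- Entropy (in bits) of the random variable `f` on the finite probability space `(Ω, p)`. -/
def entOf {Ω S : Type*} [Fintype Ω] [Fintype S] (p : Ω → ℝ) (f : Ω → S) : ℝ :=
  Hent (pmap p f)

/-- Conditional Shannon entropy `H(f | g)` (in bits). -/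
def condEnt {Ω S T : Type*} [Fintype Ω] [Fintype S] [Fintype T]
    (p : Ω → ℝ) (f : Ω → S) (g : Ω → T) : ℝ :=
  entOf p (fun ω => (f ω, g ω)) - entOf p g

/-- Mutual information `I(f; g)` (in bits). -/
def MI {Ω S T : Type*} [Fintype Ω] [Fintype S] [Fintype T]
    (p : Ω → ℝ) (f : Ω → S) (g : Ω → T) : ℝ :=
  entOf p f + entOf p g - entOf p (fun ω => (f ω, g ω))

/-- Conditional mutual information `I(f; g | h)` (in bits). -/
def CMI {Ω S T W : Type*} [Fintype Ω] [Fintype S] [Fintype T] [Fintype W]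
    (p : Ω → ℝ) (f : Ω → S) (g : Ω → T) (h : Ω → W) : ℝ :=
  entOf p (fun ω => (f ω, h ω)) + entOf p (fun ω => (g ω, h ω))
    - entOf p (fun ω => (f ω, g ω, h ω)) - entOf p h

/-- `p` is a probability mass function on the finite set `S`. -/
def IsPMF {S : Type*} [Fintype S] (p : S → ℝ) : Prop :=
  (∀ s, 0 ≤ p s) ∧ ∑ s, p s = 1

/-- `W` is a transition probability (stochastic kernel) from `S` to `T`. -/
def IsKernel {S T : Type*} [Fintype S] [Fintype T] (W : S → T → ℝ) : Prop :=
  ∀ s, IsPMF (W s)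

/-- Binary entropy function `h₂` (in bits). -/
def h2 (x : ℝ) : ℝ := nH x + nH (1 - x)

/-- Binary convolution `a ⋆ b = a(1-b) + b(1-a)`. -/
def bstar (a b : ℝ) : ℝ := a * (1 - b) + b * (1 - a)

/-- Bernoulli pmf on `Bool`: `P[true] = p`, `P[false] = 1 - p`. -/
def bern (p : ℝ) : Bool → ℝ := fun b => if b then p else 1 - p

open Real

lemma nH_eq (x : ℝ) : nH x = negMulLog x / Real.log 2 := by
  unfold nH negMulLog Real.logb; ring

lemma nH_mul (x y : ℝ) : nH (x * y) = x * nH y + y * nH x := by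
  simp only [nH_eq, negMulLog_mul]; ring

lemma nH_split (t x : ℝ) : nH (t * x) + nH (t * (1 - x)) = t * h2 x + nH t := by
  simp only [nH_mul, h2]; ring

lemma h2_eq (x : ℝ) : h2 x = (negMulLog x + negMulLog (1 - x)) / Real.log 2 := by
  simp only [h2, nH_eq]; ring

lemma h2_symm (x : ℝ) : h2 (1 - x) = h2 x := by
  simp only [h2, sub_sub_cancel]; ring

lemma continuous_h2 : Continuous h2 := by
  have : h2 = fun x => (negMulLog x + negMulLog (1 - x)) / Real.log 2 := funext h2_eq
  rw [this]
  fun_prop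

lemma hasDerivAt_h2 {x : ℝ} (h0 : x ≠ 0) (h1 : x ≠ 1) :
    HasDerivAt h2 ((Real.log (1 - x) - Real.log x) / Real.log 2) x := by
  have e1 : HasDerivAt negMulLog (-Real.log x - 1) x := hasDerivAt_negMulLog h0
  have e2 : HasDerivAt (fun y : ℝ => 1 - y) (-1) x := by
    simpa using (hasDerivAt_id x).const_sub 1
  have e3 : HasDerivAt (fun y : ℝ => negMulLog (1 - y)) ((-Real.log (1-x) - 1) * (-1)) x :=
    (hasDerivAt_negMulLog (by intro h; apply h1; linarith)).comp x e2
  have e4 := ((e1.add e3).div_const (Real.log 2))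
  have : h2 = fun y => (negMulLog y + negMulLog (1 - y)) / Real.log 2 := funext h2_eq
  rw [this]
  exact e4.congr_deriv (by ring)

/-- `g(x) = x(1-x)(log(1-x) - log x)`, written via `negMulLog` for continuity. -/
def MGg (x : ℝ) : ℝ := (1 - x) * negMulLog x - x * negMulLog (1 - x)

lemma MGg_eq (x : ℝ) : MGg x = x * (1 - x) * (Real.log (1 - x) - Real.log x) := by
  unfold MGg negMulLog; ring

lemma MGg_half : MGg (1/2 : ℝ) = 0 := by norm_num [MGg]

/-- first derivative of MGg on (0,1) -/
def MGg' (x : ℝ) : ℝ := (1 - 2*x) * (Real.log (1 - x) - Real.log x) - 1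

lemma hasDerivAt_MGg {x : ℝ} (h0 : x ≠ 0) (h1 : x ≠ 1) :
    HasDerivAt MGg (MGg' x) x := by
  have h1' : (1:ℝ) - x ≠ 0 := by intro h; apply h1; linarith
  have e2 : HasDerivAt (fun y : ℝ => 1 - y) (-1) x := by
    simpa using (hasDerivAt_id x).const_sub 1
  have e1 : HasDerivAt negMulLog (-Real.log x - 1) x := hasDerivAt_negMulLog h0
  have e3 : HasDerivAt (fun y : ℝ => negMulLog (1 - y)) ((-Real.log (1-x) - 1) * (-1)) x :=
    (hasDerivAt_negMulLog h1').comp x e2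
  have e5 : HasDerivAt (fun y : ℝ => (1 - y) * negMulLog y)
      ((-1) * negMulLog x + (1 - x) * (-Real.log x - 1)) x := e2.mul e1
  have e6 : HasDerivAt (fun y : ℝ => y * negMulLog (1 - y))
      (1 * negMulLog (1 - x) + x * ((-Real.log (1-x) - 1) * (-1))) x :=
    (hasDerivAt_id x).mul e3
  have e7 := e5.sub e6
  exact e7.congr_deriv (by unfold MGg' negMulLog; ring)

lemma hasDerivAt_MGg' {x : ℝ} (h0 : x ≠ 0) (h1 : x ≠ 1) :
    HasDerivAt MGg' (-2 * (Real.log (1 - x) - Real.log x) - (1 - 2*x) * (1/(1-x) + 1/x)) x := by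
  have h1' : (1:ℝ) - x ≠ 0 := by intro h; apply h1; linarith
  have e2 : HasDerivAt (fun y : ℝ => 1 - y) (-1) x := by
    simpa using (hasDerivAt_id x).const_sub 1
  have l1 : HasDerivAt (fun y : ℝ => Real.log (1 - y)) ((1-x)⁻¹ * (-1)) x :=
    (Real.hasDerivAt_log h1').comp x e2
  have l2 : HasDerivAt Real.log x⁻¹ x := Real.hasDerivAt_log h0
  have laff : HasDerivAt (fun y : ℝ => 1 - 2*y) (-2) x := by
    simpa using ((hasDerivAt_id x).const_mul 2).const_sub 1
  have e8 : HasDerivAt (fun y : ℝ => (1 - 2*y) * (Real.log (1 - y) - Real.log y))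
      ((-2) * (Real.log (1-x) - Real.log x) + (1 - 2*x) * ((1-x)⁻¹ * (-1) - x⁻¹)) x :=
    laff.mul (l1.sub l2)
  have e9 := e8.sub_const 1
  exact e9.congr_deriv (by ring)

lemma MGg_concave : ConcaveOn ℝ (Set.Icc (0:ℝ) (1/2)) MGg := by
  have hint : interior (Set.Icc (0:ℝ) (1/2)) = Set.Ioo 0 (1/2) := interior_Icc
  have hmem : ∀ x ∈ Set.Ioo (0:ℝ) (1/2), x ≠ 0 ∧ x ≠ 1 := by
    rintro x ⟨hx0, hx1⟩; constructor <;> intro h <;> [exact absurd h (ne_of_gt hx0); linarith]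
  have hder : ∀ x ∈ Set.Ioo (0:ℝ) (1/2), HasDerivAt MGg (MGg' x) x := by
    intro x hx; obtain ⟨h0, h1⟩ := hmem x hx; exact hasDerivAt_MGg h0 h1
  have hderiv_eq : Set.EqOn (deriv MGg) MGg' (Set.Ioo (0:ℝ) (1/2)) := by
    intro x hx; exact (hder x hx).deriv
  refine concaveOn_of_deriv2_nonpos (convex_Icc _ _)
    (Continuous.continuousOn (by unfold MGg; fun_prop)) ?_ ?_ ?_
  · rw [hint]; intro x hx; exact ((hder x hx).differentiableAt).differentiableWithinAt
  · rw [hint]; intro x hx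
    obtain ⟨h0, h1⟩ := hmem x hx
    have hev : deriv MGg =ᶠ[nhds x] MGg' :=
      Filter.eventuallyEq_of_mem (isOpen_Ioo.mem_nhds hx) hderiv_eq
    exact (((hasDerivAt_MGg' h0 h1).differentiableAt).congr_of_eventuallyEq hev).differentiableWithinAt
  · rw [hint]; intro x hx
    obtain ⟨h0, h1⟩ := hmem x hx
    obtain ⟨hx0, hx12⟩ := id hx
    have heq : deriv (deriv MGg) x = -2 * (Real.log (1 - x) - Real.log x) - (1 - 2*x) * (1/(1-x) + 1/x) := by
      have hev : deriv MGg =ᶠ[nhds x] MGg' :=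
        Filter.eventuallyEq_of_mem (isOpen_Ioo.mem_nhds hx) hderiv_eq
      rw [hev.deriv_eq]
      exact (hasDerivAt_MGg' h0 h1).deriv
    show deriv^[2] MGg x ≤ 0
    rw [Function.iterate_succ, Function.iterate_one, Function.comp_apply, heq]
    have hlog : Real.log x ≤ Real.log (1 - x) :=
      Real.log_le_log hx0 (by linarith)
    have h1x : (0:ℝ) < 1 - x := by linarith
    have : 0 ≤ (1 - 2*x) * (1/(1-x) + 1/x) := by
      apply mul_nonneg (by linarith)
      positivity
    linarith

lemma MGg_superhom {lam α : ℝ} (hl0 : 0 ≤ lam) (hl1 : lam ≤ 1)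
    (hα : α ∈ Set.Icc (0:ℝ) (1/2)) :
    lam * MGg α ≤ MGg (lam * α + (1 - lam) * (1/2)) := by
  have h := MGg_concave.2 hα (Set.mem_Icc.mpr ⟨by norm_num, le_refl _⟩) hl0
    (by linarith : (0:ℝ) ≤ 1 - lam) (by ring)
  simp only [smul_eq_mul, MGg_half, mul_zero, add_zero] at h
  exact h

section interior

variable {ε : ℝ}

/-- the `L` function: `log((1-x)/x)`. -/
def MGL (x : ℝ) : ℝ := Real.log (1 - x) - Real.log x

lemma MGL_pos {x : ℝ} (h0 : 0 < x) (h1 : x < 1/2) : 0 < MGL x :=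
  sub_pos.mpr (Real.log_lt_log h0 (by linarith))

lemma hasDerivAt_MGL {x : ℝ} (h0 : x ≠ 0) (h1 : (1:ℝ) - x ≠ 0) :
    HasDerivAt MGL (-(1/((1-x)*x))) x := by
  have e2 : HasDerivAt (fun y : ℝ => 1 - y) (-1) x := by
    simpa using (hasDerivAt_id x).const_sub 1
  have l1 : HasDerivAt (fun y : ℝ => Real.log (1 - y)) ((1-x)⁻¹ * (-1)) x :=
    (Real.hasDerivAt_log h1).comp x e2
  have := l1.sub (Real.hasDerivAt_log h0)
  exact this.congr_deriv (by field_simp; ring)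

/-- `s(α) = α ⋆ ε` as a function of `α`. -/
def MGs (ε α : ℝ) : ℝ := α + ε - 2*α*ε

lemma bstar_eq_MGs (α : ℝ) : bstar α ε = MGs ε α := by unfold bstar MGs; ring

lemma hasDerivAt_MGs (α : ℝ) : HasDerivAt (MGs ε) (1 - 2*ε) α := by
  have : HasDerivAt (fun y : ℝ => y + ε - 2*y*ε) (1 - 2*ε) α := by
    have := (((hasDerivAt_id α).add_const ε).sub (((hasDerivAt_id α).const_mul 2).mul_const ε))
    exact this.congr_deriv (by ring)
  exact this

lemma MGs_mem {α : ℝ} (hε0 : 0 < ε) (hε2 : ε < 1/2) (h0 : 0 < α) (h2 : α < 1/2) :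
    0 < MGs ε α ∧ MGs ε α < 1/2 := by
  unfold MGs
  constructor
  · nlinarith [mul_pos h0 (show (0:ℝ) < 1 - 2*ε by linarith)]
  · nlinarith [mul_pos (show (0:ℝ) < 1 - 2*α by linarith) (show (0:ℝ) < 1/2 - ε by linarith)]

/-- the slope-ratio function whose monotonicity is the heart of Mrs. Gerber's lemma. -/
def MGr (ε α : ℝ) : ℝ := MGL (MGs ε α) / MGL α

lemma MGr_mono (hε0 : 0 < ε) (hε2 : ε < 1/2) :
    MonotoneOn (MGr ε) (Set.Ioo (0:ℝ) (1/2)) := by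
  have hint : interior (Set.Ioo (0:ℝ) (1/2)) = Set.Ioo 0 (1/2) := interior_Ioo
  have hderiv : ∀ α ∈ Set.Ioo (0:ℝ) (1/2), HasDerivAt (MGr ε)
      (((-(1/((1-MGs ε α)*MGs ε α))) * (1-2*ε) * MGL α -
        MGL (MGs ε α) * (-(1/((1-α)*α)))) / (MGL α)^2) α := by
    intro α hα
    obtain ⟨h0, h2⟩ := hα
    obtain ⟨hs0, hs2⟩ := MGs_mem hε0 hε2 h0 h2
    have hL : MGL α ≠ 0 := ne_of_gt (MGL_pos h0 h2)
    have hnum : HasDerivAt (fun y => MGL (MGs ε y)) ((-(1/((1-MGs ε α)*MGs ε α))) * (1-2*ε)) α :=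
      (hasDerivAt_MGL (ne_of_gt hs0) (by linarith)).comp α (hasDerivAt_MGs α)
    have hden : HasDerivAt MGL (-(1/((1-α)*α))) α :=
      hasDerivAt_MGL (ne_of_gt h0) (by linarith)
    exact hnum.div hden hL
  apply monotoneOn_of_deriv_nonneg (convex_Ioo _ _)
  · intro α hα
    exact ((hderiv α hα).differentiableAt).continuousAt.continuousWithinAt
  · rw [hint]; intro α hα; exact ((hderiv α hα).differentiableAt).differentiableWithinAt
  · rw [hint]
    intro α hα
    rw [(hderiv α hα).deriv]
    obtain ⟨h0, h2⟩ := hα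
    obtain ⟨hs0, hs2⟩ := MGs_mem hε0 hε2 h0 h2
    have hLα : 0 < MGL α := MGL_pos h0 h2
    have hLs : 0 < MGL (MGs ε α) := MGL_pos hs0 hs2
    apply div_nonneg _ (sq_nonneg _)
    -- key: reduces to (1-2ε) g(α) ≤ g(s)
    have key : (1 - 2*ε) * MGg α ≤ MGg (MGs ε α) := by
      have h := MGg_superhom (by linarith : (0:ℝ) ≤ 1-2*ε) (by linarith)
        (Set.mem_Icc.mpr ⟨le_of_lt h0, le_of_lt h2⟩)
      have : (1-2*ε) * α + (1 - (1-2*ε)) * (1/2) = MGs ε α := by unfold MGs; ring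
      rwa [this] at h
    rw [MGg_eq, MGg_eq] at key
    have hα1 : (0:ℝ) < 1 - α := by linarith
    have hs1 : (0:ℝ) < 1 - MGs ε α := by linarith
    have e1 : (-(1/((1-MGs ε α)*MGs ε α))) * (1-2*ε) * MGL α - MGL (MGs ε α) * (-(1/((1-α)*α)))
        = (MGs ε α * (1 - MGs ε α) * MGL (MGs ε α) - (1-2*ε) * (α * (1-α) * MGL α))
          / ((1-MGs ε α) * MGs ε α * ((1-α)*α)) := by
      field_simp
      ring
    rw [e1]
    apply div_nonneg
    · unfold MGL at *; linarith
    · positivity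

end interior

section psi

/-- tangent-line inequality at `v`, interior case, for `α ∈ [0, 1/2]`. -/
lemma MG_tangent_half {ε v : ℝ} (hε0 : 0 < ε) (hε2 : ε < 1/2)
    (hv0 : 0 < v) (hv2 : v < 1/2) {α : ℝ} (hα : α ∈ Set.Icc (0:ℝ) (1/2)) :
    h2 (bstar v ε) + ((1 - 2*ε) * MGr ε v) * (h2 α - h2 v) ≤ h2 (bstar α ε) := by
  set c : ℝ := (1 - 2*ε) * MGr ε v with hc
  set ψ : ℝ → ℝ := fun y => h2 (MGs ε y) - c * h2 y with hψ
  have hψcont : Continuous ψ := by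
    apply Continuous.sub
    · exact continuous_h2.comp (by unfold MGs; fun_prop)
    · exact continuous_const.mul continuous_h2
  have hψderiv : ∀ y ∈ Set.Ioo (0:ℝ) (1/2), HasDerivAt ψ
      (((1 - 2*ε) * MGL (MGs ε y) - c * MGL y) / Real.log 2) y := by
    intro y hy
    obtain ⟨h0, h2'⟩ := hy
    obtain ⟨hs0, hs2⟩ := MGs_mem hε0 hε2 h0 h2'
    have d1 : HasDerivAt (fun y => h2 (MGs ε y)) ((MGL (MGs ε y) / Real.log 2) * (1 - 2*ε)) y := by
      have := (hasDerivAt_h2 (ne_of_gt hs0) (by linarith : MGs ε y ≠ 1)).comp y (hasDerivAt_MGs y)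
      exact this
    have d2 : HasDerivAt (fun y => c * h2 y) (c * (MGL y / Real.log 2)) y :=
      (hasDerivAt_h2 (ne_of_gt h0) (by linarith : y ≠ 1)).const_mul c
    have := d1.sub d2
    exact this.congr_deriv (by unfold MGL; ring)
  -- sign of the derivative
  have hsign : ∀ y ∈ Set.Ioo (0:ℝ) (1/2),
      (y ≤ v → ((1 - 2*ε) * MGL (MGs ε y) - c * MGL y) / Real.log 2 ≤ 0) ∧
      (v ≤ y → 0 ≤ ((1 - 2*ε) * MGL (MGs ε y) - c * MGL y) / Real.log 2) := by
    intro y hy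
    obtain ⟨h0, h2'⟩ := hy
    have hLy : 0 < MGL y := MGL_pos h0 h2'
    have hLv : 0 < MGL v := MGL_pos hv0 hv2
    have hy' : y ∈ Set.Ioo (0:ℝ) (1/2) := ⟨h0, h2'⟩
    have hv' : v ∈ Set.Ioo (0:ℝ) (1/2) := ⟨hv0, hv2⟩
    have hexp : (1 - 2*ε) * MGL (MGs ε y) - c * MGL y
        = (1 - 2*ε) * MGL y * (MGr ε y - MGr ε v) := by
      rw [hc]
      unfold MGr
      field_simp
    have hlog2 : (0:ℝ) < Real.log 2 := Real.log_pos (by norm_num)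
    constructor
    · intro hyv
      apply div_nonpos_of_nonpos_of_nonneg _ (le_of_lt hlog2)
      rw [hexp]
      have := MGr_mono hε0 hε2 hy' hv' hyv
      exact mul_nonpos_of_nonneg_of_nonpos
        (mul_nonneg (by linarith) hLy.le) (by linarith)
    · intro hvy
      apply div_nonneg _ (le_of_lt hlog2)
      rw [hexp]
      have := MGr_mono hε0 hε2 hv' hy' hvy
      exact mul_nonneg (mul_nonneg (by linarith) hLy.le) (by linarith)
  -- ψ is antitone on [0, v] and monotone on [v, 1/2]
  have hanti : AntitoneOn ψ (Set.Icc (0:ℝ) v) := by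
    apply antitoneOn_of_deriv_nonpos (convex_Icc _ _) hψcont.continuousOn
    · rw [interior_Icc]
      intro y hy
      exact ((hψderiv y ⟨hy.1, lt_trans hy.2 hv2⟩).differentiableAt).differentiableWithinAt
    · rw [interior_Icc]
      intro y hy
      rw [(hψderiv y ⟨hy.1, lt_trans hy.2 hv2⟩).deriv]
      exact (hsign y ⟨hy.1, lt_trans hy.2 hv2⟩).1 (le_of_lt hy.2)
  have hmono : MonotoneOn ψ (Set.Icc v (1/2)) := by
    apply monotoneOn_of_deriv_nonneg (convex_Icc _ _) hψcont.continuousOn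
    · rw [interior_Icc]
      intro y hy
      exact ((hψderiv y ⟨lt_trans hv0 hy.1, hy.2⟩).differentiableAt).differentiableWithinAt
    · rw [interior_Icc]
      intro y hy
      rw [(hψderiv y ⟨lt_trans hv0 hy.1, hy.2⟩).deriv]
      exact (hsign y ⟨lt_trans hv0 hy.1, hy.2⟩).2 (le_of_lt hy.1)
  have hmin : ψ v ≤ ψ α := by
    obtain ⟨hα0, hα2⟩ := hα
    rcases le_total α v with h | h
    · exact hanti (Set.mem_Icc.mpr ⟨hα0, h⟩) (Set.mem_Icc.mpr ⟨le_of_lt hv0, le_refl _⟩) h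
    · exact hmono (Set.mem_Icc.mpr ⟨le_refl _, le_of_lt hv2⟩) (Set.mem_Icc.mpr ⟨h, hα2⟩) h
  rw [hψ] at hmin
  simp only [bstar_eq_MGs]
  dsimp at hmin
  linarith

end psi

lemma h2_monoOn : MonotoneOn h2 (Set.Icc (0:ℝ) (1/2)) := by
  apply monotoneOn_of_deriv_nonneg (convex_Icc _ _) continuous_h2.continuousOn
  · rw [interior_Icc]
    intro y hy
    exact ((hasDerivAt_h2 (ne_of_gt hy.1) (by linarith [hy.2] : y ≠ 1)).differentiableAt).differentiableWithinAt
  · rw [interior_Icc]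
    intro y hy
    rw [(hasDerivAt_h2 (ne_of_gt hy.1) (by linarith [hy.2] : y ≠ 1)).deriv]
    have : 0 < MGL y := MGL_pos hy.1 hy.2
    have hlog2 : (0:ℝ) < Real.log 2 := Real.log_pos (by norm_num)
    unfold MGL at this
    positivity

/-- `h2` compared at two points on the same side of `1/2`: closer to `1/2` is bigger. -/
lemma h2_le_h2 {x y : ℝ} (hx0 : 0 ≤ x) (hxy : x ≤ y) (hy : y ≤ 1/2) : h2 x ≤ h2 y :=
  h2_monoOn ⟨hx0, le_trans hxy hy⟩ ⟨le_trans hx0 hxy, hy⟩ hxy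

/-- **Key lemma**: tangent-line bound for Mrs. Gerber's lemma. -/
lemma MG_key {ε v : ℝ} (hε : ε ∈ Set.Icc (0:ℝ) (1/2)) (hv : v ∈ Set.Icc (0:ℝ) (1/2)) :
    ∃ c : ℝ, ∀ α ∈ Set.Icc (0:ℝ) 1,
      h2 (bstar v ε) + c * (h2 α - h2 v) ≤ h2 (bstar α ε) := by
  obtain ⟨hε0, hε2⟩ := hε
  obtain ⟨hv0, hv2⟩ := hv
  -- degenerate case ε = 1/2
  rcases eq_or_lt_of_le hε2 with hhalf | hε2'
  · refine ⟨0, fun α _ => ?_⟩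
    have hb : ∀ t : ℝ, bstar t ε = 1/2 := by intro t; rw [hhalf]; unfold bstar; ring
    rw [hb, hb]
    simp
  -- degenerate case v = 0
  rcases eq_or_lt_of_le hv0 with hzero | hv0'
  · refine ⟨0, fun α hα => ?_⟩
    obtain ⟨hα0, hα1⟩ := hα
    have hb0 : bstar v ε = ε := by rw [← hzero]; unfold bstar; ring
    rw [hb0]
    simp only [zero_mul, add_zero]
    -- h2 ε ≤ h2 (bstar α ε)
    set s := bstar α ε with hs
    have hsε : ε ≤ s := by rw [hs]; unfold bstar; nlinarith
    have hs1ε : s ≤ 1 - ε := by rw [hs]; unfold bstar; nlinarith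
    rcases le_total s (1/2) with h | h
    · exact h2_le_h2 hε0 hsε h
    · rw [← h2_symm s]
      exact h2_le_h2 hε0 (by linarith) (by linarith)
  -- degenerate case v = 1/2
  rcases eq_or_lt_of_le hv2 with hvhalf | hv2'
  · refine ⟨1, fun α hα => ?_⟩
    obtain ⟨hα0, hα1⟩ := hα
    have hb : bstar v ε = 1/2 := by rw [hvhalf]; unfold bstar; ring
    rw [hb, ← hvhalf]
    have : h2 α ≤ h2 (bstar α ε) := by
      set s := bstar α ε with hs
      rcases le_total α (1/2) with h | h
      · have hαs : α ≤ s := by rw [hs]; unfold bstar; nlinarith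
        have hs2 : s ≤ 1/2 := by rw [hs]; unfold bstar; nlinarith
        exact h2_le_h2 hα0 hαs hs2
      · have hαs : 1 - α ≤ 1 - s := by rw [hs]; unfold bstar; nlinarith
        have hs2 : 1 - s ≤ 1/2 := by rw [hs]; unfold bstar; nlinarith
        rw [← h2_symm α, ← h2_symm s]
        exact h2_le_h2 (by linarith) hαs hs2
    linarith
  -- degenerate case ε = 0
  rcases eq_or_lt_of_le hε0 with hzero | hε0'
  · refine ⟨1, fun α _ => ?_⟩
    have hb : ∀ t : ℝ, bstar t ε = t := by intro t; rw [← hzero]; unfold bstar; ring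
    rw [hb, hb]
    linarith
  -- interior case
  refine ⟨(1 - 2*ε) * MGr ε v, fun α hα => ?_⟩
  obtain ⟨hα0, hα1⟩ := hα
  rcases le_total α (1/2) with h | h
  · exact MG_tangent_half hε0' hε2' hv0' hv2' ⟨hα0, h⟩
  · have key := MG_tangent_half hε0' hε2' hv0' hv2'
      (⟨by linarith, by linarith⟩ : 1 - α ∈ Set.Icc (0:ℝ) (1/2))
    have e1 : bstar (1-α) ε = 1 - bstar α ε := by unfold bstar; ring
    rw [e1, h2_symm, h2_symm] at key
    exact key

lemma bern_sum (ε : ℝ) : bern ε true + bern ε false = 1 := by simp [bern]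

section book
variable {W U : Type*} [Fintype W] [Fintype U]

lemma pmap_nonneg {p : W → ℝ} (hp : ∀ w, 0 ≤ p w) {S : Type*} (f : W → S) (s : S) :
    0 ≤ pmap p f s :=
  Finset.sum_nonneg fun w _ => by split <;> [exact hp w; exact le_refl 0]

lemma pmap_sum {p : W → ℝ} {S : Type*} [Fintype S] (f : W → S) :
    ∑ s, pmap p f s = ∑ w, p w := by
  unfold pmap
  rw [Finset.sum_comm]
  apply Finset.sum_congr rfl
  intro w _
  simp

end book

lemma ebs1 (ε P A : ℝ) : P * A * (1 - ε) + P * (1 - A) * ε = P * bstar A ε := by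
  unfold bstar; ring
lemma ebs2 (ε P A : ℝ) : P * A * ε + P * (1 - A) * (1 - ε) = P * (1 - bstar A ε) := by
  unfold bstar; ring

lemma sum_tangent {U : Type*} [Fintype U] (P A : U → ℝ) (K c w : ℝ)
    (hP : ∑ u, P u = 1) (hA : ∑ u, P u * A u = w) :
    ∑ u, P u * (K + c * (A u - w)) = K := by
  have h : ∀ u ∈ Finset.univ, P u * (K + c * (A u - w))
      = K * P u + c * (P u * A u) - (c * w) * P u := fun u _ => by ring
  rw [Finset.sum_congr rfl h, Finset.sum_sub_distrib, Finset.sum_add_distrib,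
    ← Finset.mul_sum, ← Finset.mul_sum, ← Finset.mul_sum, hP, hA]
  ring

lemma bern_t (ε : ℝ) : bern ε true = ε := rfl
lemma bern_f (ε : ℝ) : bern ε false = 1 - ε := rfl
lemma xor_tt : (true ^^ true) = false := rfl
lemma xor_tf : (true ^^ false) = true := rfl
lemma xor_ft : (false ^^ true) = true := rfl
lemma xor_ff : (false ^^ false) = false := rfl

section push
variable {W U : Type*} [Fintype W] [Fintype U]

lemma pmapAUE (μ : W → ℝ) (f : W → Bool) (g : W → U) (ε : ℝ) (a : Bool) (u : U) (e : Bool) :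
    pmap (fun ω : W × Bool => μ ω.1 * bern ε ω.2)
      (fun ω => (f ω.1, (g ω.1, xor (f ω.1) ω.2))) (a,(u,e))
      = pmap μ (fun w => (f w, g w)) (a,u) * bern ε (xor a e) := by
  unfold pmap
  rw [Fintype.sum_prod_type, Finset.sum_mul]
  apply Finset.sum_congr rfl
  intro w _
  rw [Fintype.sum_bool]
  cases a <;> cases e <;> by_cases hf : f w = true <;> by_cases hg : g w = u <;>
    simp_all [bern, Prod.ext_iff] <;> ring

lemma pmapUE (μ : W → ℝ) (f : W → Bool) (g : W → U) (ε : ℝ) (u : U) (e : Bool) :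
    pmap (fun ω : W × Bool => μ ω.1 * bern ε ω.2)
      (fun ω => (g ω.1, xor (f ω.1) ω.2)) (u,e)
      = pmap μ (fun w => (f w, g w)) (true,u) * bern ε (xor true e)
        + pmap μ (fun w => (f w, g w)) (false,u) * bern ε (xor false e) := by
  unfold pmap
  rw [Fintype.sum_prod_type, Finset.sum_mul, Finset.sum_mul, ← Finset.sum_add_distrib]
  apply Finset.sum_congr rfl
  intro w _
  rw [Fintype.sum_bool]
  cases e <;> by_cases hf : f w = true <;> by_cases hg : g w = u <;>
    simp_all [bern, Prod.ext_iff] <;> ring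

lemma pmapAU (μ : W → ℝ) (f : W → Bool) (g : W → U) (ε : ℝ) (a : Bool) (u : U) :
    pmap (fun ω : W × Bool => μ ω.1 * bern ε ω.2) (fun ω => (f ω.1, g ω.1)) (a,u)
      = pmap μ (fun w => (f w, g w)) (a,u) := by
  unfold pmap
  rw [Fintype.sum_prod_type]
  apply Finset.sum_congr rfl
  intro w _
  rw [Fintype.sum_bool]
  by_cases hf : f w = a <;> by_cases hg : g w = u <;>
    simp_all [bern, Prod.ext_iff] <;> ring

lemma pmapU (μ : W → ℝ) (f : W → Bool) (g : W → U) (ε : ℝ) (u : U) :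
    pmap (fun ω : W × Bool => μ ω.1 * bern ε ω.2) (fun ω => g ω.1) u
      = pmap μ (fun w => (f w, g w)) (true,u) + pmap μ (fun w => (f w, g w)) (false,u) := by
  unfold pmap
  rw [Fintype.sum_prod_type, ← Finset.sum_add_distrib]
  apply Finset.sum_congr rfl
  intro w _
  rw [Fintype.sum_bool]
  by_cases hf : f w = true <;> by_cases hg : g w = u <;>
    simp_all [bern, Prod.ext_iff] <;> ring

lemma perAUE' (Q ε : ℝ) (a : Bool) :
    (∑ e : Bool, nH (Q * bern ε (xor a e))) = Q * h2 ε + nH (Q) := by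
  rw [Fintype.sum_bool]
  have := nH_split Q ε
  cases a <;> simp [bern] <;> linarith

end push


/-- **Mrs. Gerber bound on the residual uncertainty** (step (57) in the proof of
Proposition 4). Let `(A, U) = (f(ω), g(ω))` be random variables on `(𝒲, μ)` with `A`
binary, and let `N ∼ Bernoulli(ε)`, `ε ∈ [0, 1/2]`, be independent of `(A, U)` (the joint
space is `𝒲 × Bool` with product pmf); set `E = A ⊕ N`. If `v ∈ [0, 1/2]` satisfies
`h₂(v) = H(A | U)`, then `H(A | U, E) ≤ h₂(v) + h₂(ε) − h₂(v ⋆ ε)`. -/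
theorem mrs_gerber_residual {W U : Type*} [Fintype W] [Fintype U]
    (ε v : ℝ) (hε : ε ∈ Set.Icc (0 : ℝ) (1 / 2)) (hv : v ∈ Set.Icc (0 : ℝ) (1 / 2))
    (μ : W → ℝ) (hμ : IsPMF μ) (f : W → Bool) (g : W → U)
    (hAU : h2 v = condEnt (fun ω : W × Bool => μ ω.1 * bern ε ω.2)
        (fun ω => f ω.1) (fun ω => g ω.1)) :
    condEnt (fun ω : W × Bool => μ ω.1 * bern ε ω.2)
        (fun ω => f ω.1) (fun ω => (g ω.1, xor (f ω.1) ω.2))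
      ≤ h2 v + h2 ε - h2 (bstar v ε) := by
  classical
  obtain ⟨hμ0, hμ1⟩ := hμ
  obtain ⟨hε0, hε2⟩ := hε
  obtain ⟨hv0, hv2⟩ := hv
  set p : W × Bool → ℝ := fun ω => μ ω.1 * bern ε ω.2 with hpdef
  set q : Bool × U → ℝ := pmap μ (fun w => (f w, g w)) with hqdef
  have hq0 : ∀ s, 0 ≤ q s := fun s => pmap_nonneg hμ0 _ s
  have hq1 : ∑ s, q s = 1 := by rw [hqdef, pmap_sum, hμ1]
  -- pushforward computations
  have hAUE : ∀ (a : Bool) (u : U) (e : Bool),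
      pmap p (fun ω => (f ω.1, (g ω.1, xor (f ω.1) ω.2))) (a,(u,e))
        = q (a,u) * bern ε (xor a e) := fun a u e => pmapAUE μ f g ε a u e
  have hUE : ∀ (u : U) (e : Bool),
      pmap p (fun ω => (g ω.1, xor (f ω.1) ω.2)) (u,e)
        = q (true,u) * bern ε (xor true e) + q (false,u) * bern ε (xor false e) :=
    fun u e => pmapUE μ f g ε u e
  have hAUm : ∀ (a : Bool) (u : U),
      pmap p (fun ω => (f ω.1, g ω.1)) (a,u) = q (a,u) := fun a u => pmapAU μ f g ε a u
  have hUm : ∀ u : U,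
      pmap p (fun ω => g ω.1) u = q (true,u) + q (false,u) := fun u => pmapU μ f g ε u
  -- abbreviations
  set pu : U → ℝ := fun u => q (true,u) + q (false,u) with hpudef
  set αu : U → ℝ := fun u => if pu u = 0 then v else q (true,u) / pu u with hαudef
  have hpu0 : ∀ u, 0 ≤ pu u := fun u => add_nonneg (hq0 _) (hq0 _)
  have hqT : ∀ u, q (true,u) = pu u * αu u := by
    intro u
    by_cases h : pu u = 0
    · have h1 : q (true,u) = 0 := by
        have := hq0 (true,u); have := hq0 (false,u)
        have : q (true,u) + q (false,u) = 0 := h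
        linarith [hq0 (true,u), hq0 (false,u)]
      rw [h1, h, zero_mul]
    · simp only [hαudef, if_neg h]
      field_simp
  have hqF : ∀ u, q (false,u) = pu u * (1 - αu u) := by
    intro u
    have : q (false,u) = pu u - q (true,u) := by
      simp only [hpudef]; ring
    rw [this, hqT u]; ring
  have hαmem : ∀ u, αu u ∈ Set.Icc (0:ℝ) 1 := by
    intro u
    by_cases h : pu u = 0
    · simp only [hαudef, if_pos h]
      exact ⟨hv0, by linarith⟩
    · simp only [hαudef, if_neg h]
      have hppos : 0 < pu u := lt_of_le_of_ne (hpu0 u) (Ne.symm h)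
      constructor
      · exact div_nonneg (hq0 _) (hpu0 u)
      · rw [div_le_one hppos]
        have := hq0 (false,u)
        simp only [hpudef]
        linarith
  have hpusum : ∑ u, pu u = 1 := by
    have : ∑ s : Bool × U, q s = (∑ u, q (true,u)) + ∑ u, q (false,u) := by
      rw [Fintype.sum_prod_type, Fintype.sum_bool]
    rw [← hq1, this, ← Finset.sum_add_distrib]
  -- entropy computations
  have hq1' : ∑ a : Bool, ∑ u, q (a,u) = 1 := by
    rw [← Fintype.sum_prod_type]; exact hq1
  have hHq : Hent q = ∑ a : Bool, ∑ u, nH (q (a,u)) := by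
    unfold Hent; rw [Fintype.sum_prod_type]
  have perAUE : ∀ (a : Bool) (u : U),
      (∑ e : Bool, nH (q (a,u) * bern ε (xor a e))) = q (a,u) * h2 ε + nH (q (a,u)) :=
    fun a u => perAUE' (q (a,u)) ε a
  have eAUE : entOf p (fun ω => (f ω.1, (g ω.1, xor (f ω.1) ω.2))) = Hent q + h2 ε := by
    unfold entOf Hent
    simp only [Fintype.sum_prod_type]
    have step : ∀ (a : Bool), ∑ u, ∑ e : Bool,
        nH (pmap p (fun ω => (f ω.1, (g ω.1, xor (f ω.1) ω.2))) (a,(u,e)))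
          = ∑ u, (q (a,u) * h2 ε + nH (q (a,u))) := by
      intro a
      apply Finset.sum_congr rfl
      intro u _
      rw [← perAUE a u]
      apply Finset.sum_congr rfl
      intro e _
      rw [hAUE a u e]
    rw [Fintype.sum_bool, step, step]
    rw [Fintype.sum_bool, Finset.sum_add_distrib, Finset.sum_add_distrib,
      ← Finset.sum_mul, ← Finset.sum_mul]
    have h1 := hq1'
    rw [Fintype.sum_bool] at h1
    have hmul : (∑ u, q (true,u)) * h2 ε + (∑ u, q (false,u)) * h2 ε = h2 ε := by
      rw [← add_mul, h1, one_mul]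
    linarith
  have eUE : entOf p (fun ω => (g ω.1, xor (f ω.1) ω.2))
      = ∑ u, (pu u * h2 (bstar (αu u) ε) + nH (pu u)) := by
    unfold entOf Hent
    simp only [Fintype.sum_prod_type]
    apply Finset.sum_congr rfl
    intro u _
    rw [Fintype.sum_bool, hUE u true, hUE u false]
    rw [xor_tt, xor_ft, xor_tf, xor_ff, bern_t, bern_f]
    rw [hqT u, hqF u, ebs1 ε (pu u) (αu u), ebs2 ε (pu u) (αu u)]
    exact nH_split (pu u) (bstar (αu u) ε)
  have eAU : entOf p (fun ω => (f ω.1, g ω.1)) = Hent q := by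
    unfold entOf Hent
    apply Finset.sum_congr rfl
    rintro ⟨a, u⟩ _
    rw [hAUm a u]
  have eU : entOf p (fun ω => g ω.1) = ∑ u, nH (pu u) := by
    unfold entOf Hent
    apply Finset.sum_congr rfl
    intro u _
    rw [hUm u]
  have eHq2 : Hent q = ∑ u, (pu u * h2 (αu u) + nH (pu u)) := by
    rw [hHq, Fintype.sum_bool, ← Finset.sum_add_distrib]
    apply Finset.sum_congr rfl
    intro u _
    rw [hqT u, hqF u]
    exact nH_split (pu u) (αu u)
  -- the hypothesis gives the average entropy
  have hsum_v : ∑ u, pu u * h2 (αu u) = h2 v := by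
    have : h2 v = Hent q - ∑ u, nH (pu u) := by
      rw [hAU]; unfold condEnt; rw [eAU, eU]
    rw [this, eHq2, Finset.sum_add_distrib]
    ring
  -- Mrs. Gerber bound
  obtain ⟨c, hc⟩ := MG_key ⟨hε0, hε2⟩ ⟨hv0, hv2⟩
  have hbound : h2 (bstar v ε) ≤ ∑ u, pu u * h2 (bstar (αu u) ε) := by
    have pt : ∀ u, pu u * (h2 (bstar v ε) + c * (h2 (αu u) - h2 v))
        ≤ pu u * h2 (bstar (αu u) ε) := fun u =>
      mul_le_mul_of_nonneg_left (hc _ (hαmem u)) (hpu0 u)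
    have hsum := Finset.sum_le_sum (s := Finset.univ) (fun u _ => pt u)
    have hlhs := sum_tangent pu (fun u => h2 (αu u)) (h2 (bstar v ε)) c (h2 v) hpusum hsum_v
    rw [hlhs] at hsum
    exact hsum
  -- final assembly
  unfold condEnt
  rw [eAUE, eUE, eHq2, Finset.sum_add_distrib, Finset.sum_add_distrib]
  have hS := hsum_v
  linarith
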